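/- There exists γ ∈ (0,1) for which the dual-rail yield (1-γ)/2 exceeds the reverse coherent information of the amplitude damping channel; specifically, at γ = 2/3, (1-γ)/2 = 1/6 > max_{0≤x≤1} [h_b(x) - h_b(γx)]. -/

import Mathlib

/-- Binary entropy function (base 2). -/
noncomputable def binEnt (t : ℝ) : ℝ := -t * Real.logb 2 t - (1 - t) * Real.logb 2 (1 - t)

section DualRailAux

open Real Set

lemma log_le_quad {x : ℝ} (hx : 1 ≤ x) : Real.log x ≤ (x^2 - 1)/(2*x) := by
  set φ : ℝ → ℝ := fun y => y/2 - (2*y)⁻¹ - Real.log y with hφ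
  have hder : ∀ y : ℝ, 0 < y → HasDerivAt φ (1/2 - (-2/(2*y)^2) - y⁻¹) y := by
    intro y hy
    have h2y : (2:ℝ)*y ≠ 0 := by positivity
    have d0 : HasDerivAt (fun y : ℝ => 2*y) 2 y := by
      simpa using (hasDerivAt_id y).const_mul (2:ℝ)
    exact (((hasDerivAt_id y).div_const 2).sub (d0.inv h2y)).sub (Real.hasDerivAt_log (ne_of_gt hy))
  have mono : MonotoneOn φ (Set.Ici 1) := by
    apply monotoneOn_of_deriv_nonneg (convex_Ici 1)
    · exact fun y hy => (hder y (lt_of_lt_of_le one_pos hy)).continuousAt.continuousWithinAt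
    · intro y hy
      rw [interior_Ici] at hy
      exact (hder y (lt_trans one_pos hy)).differentiableAt.differentiableWithinAt
    · intro y hy
      rw [interior_Ici] at hy
      have hy0 : (0:ℝ) < y := lt_trans one_pos hy
      rw [(hder y hy0).deriv]
      have : 1/2 - (-2/(2*y)^2) - y⁻¹ = (y-1)^2/(2*y^2) := by
        field_simp
        ring
      rw [this]
      positivity
  have h1 : φ 1 ≤ φ x := mono (by simp) hx hx
  have hφ1 : φ 1 = 0 := by norm_num [hφ]
  have hx0 : (0:ℝ) < x := lt_of_lt_of_le one_pos hx
  have : (x^2-1)/(2*x) = x/2 - (2*x)⁻¹ := by field_simp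
  rw [this]
  have := h1
  simp [hφ, hφ1] at this ⊢
  linarith [this]

lemma le_log_lin {x : ℝ} (hx : 1 ≤ x) : 2*(x-1)/(x+1) ≤ Real.log x := by
  set ψ : ℝ → ℝ := fun y => Real.log y - 2 + 4*(y+1)⁻¹ with hψ
  have hder : ∀ y : ℝ, 0 < y → HasDerivAt ψ (y⁻¹ + 4*(-1/(y+1)^2)) y := by
    intro y hy
    have hy1 : y + 1 ≠ 0 := by positivity
    have d0 : HasDerivAt (fun y : ℝ => 4*(y+1)⁻¹) (4*(-1/(y+1)^2)) y := by
      have d1 : HasDerivAt (fun y : ℝ => y + 1) 1 y := (hasDerivAt_id y).add_const 1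
      simpa using (d1.inv hy1).const_mul (4:ℝ)
    exact ((Real.hasDerivAt_log (ne_of_gt hy)).sub_const 2).add d0
  have mono : MonotoneOn ψ (Set.Ici 1) := by
    apply monotoneOn_of_deriv_nonneg (convex_Ici 1)
    · exact fun y hy => (hder y (lt_of_lt_of_le one_pos hy)).continuousAt.continuousWithinAt
    · intro y hy
      rw [interior_Ici] at hy
      exact (hder y (lt_trans one_pos hy)).differentiableAt.differentiableWithinAt
    · intro y hy
      rw [interior_Ici] at hy
      have hy0 : (0:ℝ) < y := lt_trans one_pos hy
      rw [(hder y hy0).deriv]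
      have : y⁻¹ + 4*(-1/(y+1)^2) = (y-1)^2/(y*(y+1)^2) := by
        field_simp
        ring
      rw [this]
      positivity
  have h1 : ψ 1 ≤ ψ x := mono (by simp) hx hx
  have hx0 : (0:ℝ) < x := lt_of_lt_of_le one_pos hx
  have hψ1 : ψ 1 = 0 := by norm_num [hψ]
  have h2 : 2*(x-1)/(x+1) = 2 - 4*(x+1)⁻¹ := by field_simp; ring
  rw [h2]
  simp [hψ, hψ1] at h1
  linarith [h1]

lemma log3_bounds : 1.09861227 ≤ Real.log 3 ∧ Real.log 3 ≤ 1.09861233 := by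
  have h : Real.log ((531441:ℝ)/524288) = 12 * Real.log 3 - 19 * Real.log 2 := by
    rw [show ((531441:ℝ)/524288) = 3^12/2^19 by norm_num,
        Real.log_div (by norm_num) (by norm_num), Real.log_pow, Real.log_pow]
    push_cast; ring
  have hu : Real.log ((531441:ℝ)/524288) ≤ 7551629537/557256278016 :=
    le_trans (log_le_quad (by norm_num)) (by norm_num)
  have hl : (14306:ℝ)/1055729 ≤ Real.log ((531441:ℝ)/524288) :=
    le_trans (by norm_num) (le_log_lin (by norm_num))
  constructor <;> nlinarith [Real.log_two_gt_d9, Real.log_two_lt_d9]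

lemma l1_bounds : -1.3394194 ≤ Real.log ((131:ℝ)/500) ∧ Real.log ((131:ℝ)/500) ≤ -1.3393935 := by
  have h : Real.log ((131:ℝ)/500) = Real.log ((131:ℝ)/125) - 2 * Real.log 2 := by
    rw [show ((131:ℝ)/500) = (131/125)/2^2 by norm_num,
        Real.log_div (by norm_num) (by norm_num), Real.log_pow]
    push_cast; ring
  have hu : Real.log ((131:ℝ)/125) ≤ 768/16375 :=
    le_trans (log_le_quad (by norm_num)) (by norm_num)
  have hl : (3:ℝ)/64 ≤ Real.log ((131:ℝ)/125) :=
    le_trans (by norm_num) (le_log_lin (by norm_num))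
  constructor <;> nlinarith [Real.log_two_gt_d9, Real.log_two_lt_d9]

lemma l2_bounds : -0.3038122 ≤ Real.log ((369:ℝ)/500) ∧ Real.log ((369:ℝ)/500) ≤ -0.3038110 := by
  have h : Real.log ((369:ℝ)/500) = Real.log 3 - Real.log ((125:ℝ)/123) - 2 * Real.log 2 := by
    rw [show ((369:ℝ)/500) = 3/(((125:ℝ)/123)*2^2) by norm_num,
        Real.log_div (by norm_num) (by norm_num), Real.log_mul (by norm_num) (by norm_num),
        Real.log_pow]
    push_cast; ring
  have hu : Real.log ((125:ℝ)/123) ≤ 248/15375 :=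
    le_trans (log_le_quad (by norm_num)) (by norm_num)
  have hl : (1:ℝ)/62 ≤ Real.log ((125:ℝ)/123) :=
    le_trans (by norm_num) (le_log_lin (by norm_num))
  obtain ⟨h3l, h3u⟩ := log3_bounds
  constructor <;> nlinarith [Real.log_two_gt_d9, Real.log_two_lt_d9]

lemma l3_bounds : -1.7448846 ≤ Real.log ((131:ℝ)/750) ∧ Real.log ((131:ℝ)/750) ≤ -1.7448586 := by
  have h : Real.log ((131:ℝ)/750) = Real.log ((131:ℝ)/125) - Real.log 2 - Real.log 3 := by
    rw [show ((131:ℝ)/750) = (131/125)/(2*3) by norm_num,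
        Real.log_div (by norm_num) (by norm_num), Real.log_mul (by norm_num) (by norm_num)]
    ring
  have hu : Real.log ((131:ℝ)/125) ≤ 768/16375 :=
    le_trans (log_le_quad (by norm_num)) (by norm_num)
  have hl : (3:ℝ)/64 ≤ Real.log ((131:ℝ)/125) :=
    le_trans (by norm_num) (le_log_lin (by norm_num))
  obtain ⟨h3l, h3u⟩ := log3_bounds
  constructor <;> nlinarith [Real.log_two_gt_d9, Real.log_two_lt_d9]

lemma l4_bounds : -0.1920361 ≤ Real.log ((619:ℝ)/750) ∧ Real.log ((619:ℝ)/750) ≤ -0.1919338 := by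
  have h : Real.log ((619:ℝ)/750) = -Real.log ((2000:ℝ)/1857) + 3 * Real.log 2 - 2 * Real.log 3 := by
    rw [show ((619:ℝ)/750) = 2^3/(((2000:ℝ)/1857)*3^2) by norm_num,
        Real.log_div (by norm_num) (by norm_num), Real.log_mul (by norm_num) (by norm_num),
        Real.log_pow, Real.log_pow]
    push_cast; ring
  have hu : Real.log ((2000:ℝ)/1857) ≤ 551551/7428000 :=
    le_trans (log_le_quad (by norm_num)) (by norm_num)
  have hl : (286:ℝ)/3857 ≤ Real.log ((2000:ℝ)/1857) :=
    le_trans (by norm_num) (le_log_lin (by norm_num))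
  obtain ⟨h3l, h3u⟩ := log3_bounds
  constructor <;> nlinarith [Real.log_two_gt_d9, Real.log_two_lt_d9]

noncomputable def Fn (x : ℝ) : ℝ :=
  (-(x * Real.log x) - (1 - x) * Real.log (1 - x))
  - (-(2 * x / 3 * Real.log (2 * x / 3)) - (1 - 2 * x / 3) * Real.log (1 - 2 * x / 3))

noncomputable def Gn (x : ℝ) : ℝ :=
  Real.log (1 - x) - Real.log x
    - (2 / 3) * (Real.log (1 - 2 * x / 3) - Real.log (2 * x / 3))

lemma hasDerivAt_Fn {x : ℝ} (hx : x ∈ Set.Ioo (0:ℝ) 1) : HasDerivAt Fn (Gn x) x := by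
  obtain ⟨hx0, hx1⟩ := hx
  have hx0' : x ≠ 0 := ne_of_gt hx0
  have h1x : (1:ℝ) - x ≠ 0 := ne_of_gt (by linarith)
  have h23 : 2 * x / 3 ≠ 0 := by positivity
  have h123 : (1:ℝ) - 2 * x / 3 ≠ 0 := ne_of_gt (by linarith)
  have dlin : HasDerivAt (fun t : ℝ => 1 - t) (-1 : ℝ) x := by
    simpa using (hasDerivAt_id x).const_sub (1:ℝ)
  have dsc : HasDerivAt (fun t : ℝ => 2 * t / 3) (2/3 : ℝ) x := by
    simpa using ((hasDerivAt_id x).const_mul (2:ℝ)).div_const 3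
  have dlin2 : HasDerivAt (fun t : ℝ => 1 - 2 * t / 3) (-(2/3) : ℝ) x := by
    simpa using dsc.const_sub (1:ℝ)
  have A : HasDerivAt (fun t : ℝ => t * Real.log t) (Real.log x + 1) x :=
    Real.hasDerivAt_mul_log hx0'
  have B : HasDerivAt (fun t : ℝ => (1 - t) * Real.log (1 - t))
      ((Real.log (1 - x) + 1) * (-1)) x :=
    (Real.hasDerivAt_mul_log h1x).comp x dlin
  have C : HasDerivAt (fun t : ℝ => 2 * t / 3 * Real.log (2 * t / 3))
      ((Real.log (2 * x / 3) + 1) * (2/3)) x :=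
    by have := (Real.hasDerivAt_mul_log h23).comp x dsc; exact this
  have D : HasDerivAt (fun t : ℝ => (1 - 2 * t / 3) * Real.log (1 - 2 * t / 3))
      ((Real.log (1 - 2 * x / 3) + 1) * (-(2/3))) x :=
    by have := (Real.hasDerivAt_mul_log h123).comp x dlin2; exact this
  have E := (A.neg.sub B).sub (C.neg.sub D)
  refine E.congr_deriv ?_
  simp only [Gn]
  ring

lemma hasDerivAt_Gn {x : ℝ} (hx : x ∈ Set.Ioo (0:ℝ) 1) :
    HasDerivAt Gn (4/(3*(3-2*x)) - 1/(1-x) - 1/(3*x)) x := by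
  obtain ⟨hx0, hx1⟩ := hx
  have hx0' : x ≠ 0 := ne_of_gt hx0
  have h1x : (1:ℝ) - x ≠ 0 := ne_of_gt (by linarith)
  have h23 : 2 * x / 3 ≠ 0 := by positivity
  have h123 : (1:ℝ) - 2 * x / 3 ≠ 0 := ne_of_gt (by linarith)
  have dlin : HasDerivAt (fun t : ℝ => 1 - t) (-1 : ℝ) x := by
    simpa using (hasDerivAt_id x).const_sub (1:ℝ)
  have dsc : HasDerivAt (fun t : ℝ => 2 * t / 3) (2/3 : ℝ) x := by
    simpa using ((hasDerivAt_id x).const_mul (2:ℝ)).div_const 3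
  have dlin2 : HasDerivAt (fun t : ℝ => 1 - 2 * t / 3) (-(2/3) : ℝ) x := by
    simpa using dsc.const_sub (1:ℝ)
  have A : HasDerivAt (fun t : ℝ => Real.log (1 - t)) ((1 - x)⁻¹ * (-1)) x :=
    (Real.hasDerivAt_log h1x).comp x dlin
  have B : HasDerivAt Real.log x⁻¹ x := Real.hasDerivAt_log hx0'
  have C : HasDerivAt (fun t : ℝ => Real.log (1 - 2 * t / 3)) ((1 - 2 * x / 3)⁻¹ * (-(2/3))) x :=
    by have := (Real.hasDerivAt_log h123).comp x dlin2; exact this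
  have D : HasDerivAt (fun t : ℝ => Real.log (2 * t / 3)) ((2 * x / 3)⁻¹ * (2/3)) x :=
    by have := (Real.hasDerivAt_log h23).comp x dsc; exact this
  have E := (A.sub B).sub ((C.sub D).const_mul (2/3 : ℝ))
  refine E.congr_deriv ?_
  field_simp
  ring

lemma Gn_anti : StrictAntiOn Gn (Set.Ioo (0:ℝ) 1) := by
  apply strictAntiOn_of_deriv_neg (convex_Ioo 0 1)
  · exact fun y hy => (hasDerivAt_Gn hy).continuousAt.continuousWithinAt
  · intro y hy
    rw [interior_Ioo] at hy
    rw [(hasDerivAt_Gn hy).deriv]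
    obtain ⟨hy0, hy1⟩ := hy
    have h1 : 4/(3*(3-2*y)) < 1/(1-y) := by
      rw [div_lt_div_iff₀ (by nlinarith) (by linarith)]
      nlinarith
    have h2 : 0 < 1/(3*y) := by positivity
    linarith

lemma Fa_bound : Fn (131/500) ≤ 0.1122 := by
  have e1 : (1:ℝ) - 131/500 = 369/500 := by norm_num
  have e2 : (2:ℝ) * (131/500) / 3 = 131/750 := by norm_num
  have e3 : (1:ℝ) - 2 * (131/500) / 3 = 619/750 := by norm_num
  obtain ⟨a1, b1⟩ := l1_bounds; obtain ⟨a2, b2⟩ := l2_bounds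
  obtain ⟨a3, b3⟩ := l3_bounds; obtain ⟨a4, b4⟩ := l4_bounds
  simp only [Fn, e1, e2, e3]
  nlinarith

lemma Ga_bound : |Gn (131/500)| ≤ 0.001 := by
  have e1 : (1:ℝ) - 131/500 = 369/500 := by norm_num
  have e2 : (2:ℝ) * (131/500) / 3 = 131/750 := by norm_num
  have e3 : (1:ℝ) - 2 * (131/500) / 3 = 619/750 := by norm_num
  obtain ⟨a1, b1⟩ := l1_bounds; obtain ⟨a2, b2⟩ := l2_bounds
  obtain ⟨a3, b3⟩ := l3_bounds; obtain ⟨a4, b4⟩ := l4_bounds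
  rw [abs_le]
  simp only [Gn, e1, e2, e3]
  constructor <;> nlinarith

lemma tangent {x : ℝ} (hx : x ∈ Set.Ioo (0:ℝ) 1) :
    Fn x ≤ Fn (131/500) + Gn (131/500) * (x - 131/500) := by
  have ha : (131/500 : ℝ) ∈ Set.Ioo (0:ℝ) 1 := by constructor <;> norm_num
  obtain ⟨hx0, hx1⟩ := hx
  rcases lt_trichotomy x (131/500 : ℝ) with h | h | h
  · have hsub : Set.Icc x (131/500 : ℝ) ⊆ Set.Ioo (0:ℝ) 1 := by
      intro t ht; exact ⟨lt_of_lt_of_le hx0 ht.1, lt_of_le_of_lt ht.2 ha.2⟩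
    obtain ⟨c, hc, hs⟩ := exists_hasDerivAt_eq_slope Fn Gn h
      (fun t ht => (hasDerivAt_Fn (hsub ht)).continuousAt.continuousWithinAt)
      (fun t ht => hasDerivAt_Fn (hsub (Set.Ioo_subset_Icc_self ht)))
    have hcmem : c ∈ Set.Ioo (0:ℝ) 1 := hsub (Set.Ioo_subset_Icc_self hc)
    have hGc : Gn (131/500) < Gn c := Gn_anti hcmem ha hc.2
    have hd : (0:ℝ) < 131/500 - x := by linarith
    rw [eq_div_iff (by linarith : (131/500 : ℝ) - x ≠ 0)] at hs
    nlinarith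
  · rw [h]; simp
  · have hsub : Set.Icc (131/500 : ℝ) x ⊆ Set.Ioo (0:ℝ) 1 := by
      intro t ht; exact ⟨lt_of_lt_of_le ha.1 ht.1, lt_of_le_of_lt ht.2 hx1⟩
    obtain ⟨c, hc, hs⟩ := exists_hasDerivAt_eq_slope Fn Gn h
      (fun t ht => (hasDerivAt_Fn (hsub ht)).continuousAt.continuousWithinAt)
      (fun t ht => hasDerivAt_Fn (hsub (Set.Ioo_subset_Icc_self ht)))
    have hcmem : c ∈ Set.Ioo (0:ℝ) 1 := hsub (Set.Ioo_subset_Icc_self hc)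
    have hGc : Gn c < Gn (131/500) := Gn_anti ha hcmem hc.1
    have hd : (0:ℝ) < x - 131/500 := by linarith
    rw [eq_div_iff (by linarith : x - (131/500 : ℝ) ≠ 0)] at hs
    nlinarith

end DualRailAux

theorem dual_rail_beats_reverse_coherent_information :
    ∃ γ : ℝ, γ ∈ Set.Ioo (0 : ℝ) 1 ∧ γ = 2 / 3 ∧ (1 - γ) / 2 = 1 / 6 ∧
      ∀ x ∈ Set.Icc (0 : ℝ) 1, binEnt x - binEnt (γ * x) < (1 - γ) / 2 := by
  refine ⟨2/3, ⟨by norm_num, by norm_num⟩, rfl, by norm_num, ?_⟩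
  intro x hx
  have hlog2 : (0:ℝ) < Real.log 2 := Real.log_pos (by norm_num)
  have hconv : binEnt x - binEnt (2/3 * x) = Fn x / Real.log 2 := by
    simp only [binEnt, Fn, Real.logb, show (2:ℝ)/3 * x = 2 * x / 3 by ring]
    field_simp
  have key : Fn x < Real.log 2 / 6 := by
    rcases eq_or_lt_of_le hx.1 with h0 | h0
    · have : Fn x = 0 := by rw [← h0]; norm_num [Fn]
      rw [this]; positivity
    rcases eq_or_lt_of_le hx.2 with h1 | h1
    · have hFn1 : Fn x = 2/3 * Real.log (2/3) + 1/3 * Real.log (1/3) := by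
        rw [h1]; norm_num [Fn]; ring
      have hn1 : Real.log ((2:ℝ)/3) < 0 := Real.log_neg (by norm_num) (by norm_num)
      have hn2 : Real.log ((1:ℝ)/3) < 0 := Real.log_neg (by norm_num) (by norm_num)
      have : Fn x < 0 := by rw [hFn1]; nlinarith
      nlinarith
    · have ht := tangent ⟨h0, h1⟩
      have hga := Ga_bound
      have hfa := Fa_bound
      have habs : Gn (131/500) * (x - 131/500) ≤ 1/1000 := by
        have h1 : Gn (131/500) * (x - 131/500) ≤ |Gn (131/500) * (x - 131/500)| := le_abs_self _
        have h2 : |Gn (131/500) * (x - 131/500)| = |Gn (131/500)| * |x - 131/500| := abs_mul _ _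
        have h3 : |x - (131/500:ℝ)| ≤ 1 := by
          rw [abs_le]; constructor <;> nlinarith
        nlinarith [abs_nonneg (Gn (131/500)), abs_nonneg (x - (131/500:ℝ))]
      have hl2 := Real.log_two_gt_d9
      nlinarith
  rw [show (1 - 2/3 : ℝ)/2 = 1/6 by norm_num, hconv, div_lt_iff₀ hlog2]
  linarith
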